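/- Let ρ : ℝ → ℝ be C¹, convex, with ρ(s) = 0 for s ≤ 0 and 0 ≤ ρ' ≤ γ for a constant γ > 0. Define W(A) = (1/2)|A|² + ρ(det A) for A ∈ ℝ^{2×2}. Then for all A, B ∈ ℝ^{2×2}, the monotonicity inequality (∇W(A) − ∇W(B))·(A − B) ≥ (1 − γ)|A − B|² holds, where ∇W(A) = A + ρ'(det A) cof(A). -/

import Mathlib

/-- The cofactor matrix of a 2×2 real matrix. -/
def cof (A : Matrix (Fin 2) (Fin 2) ℝ) : Matrix (Fin 2) (Fin 2) ℝ :=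
  !![A 1 1, -(A 1 0); -(A 0 1), A 0 0]

/-- The Frobenius inner product of two 2×2 real matrices. -/
def finner (M N : Matrix (Fin 2) (Fin 2) ℝ) : ℝ :=
  ∑ i : Fin 2, ∑ j : Fin 2, M i j * N i j

/-- The gradient of W(A) = (1/2)|A|² + ρ(det A), namely ∇W(A) = A + ρ'(det A) cof A. -/
noncomputable def gradW (ρ : ℝ → ℝ) (A : Matrix (Fin 2) (Fin 2) ℝ) :
    Matrix (Fin 2) (Fin 2) ℝ :=
  A + deriv ρ A.det • cof A

/-- Monotonicity inequality: (∇W(A) − ∇W(B))·(A − B) ≥ (1 − γ)|A − B|². -/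
theorem gradW_monotone (ρ : ℝ → ℝ) (γ : ℝ) (hγ : 0 < γ)
    (hρ : ContDiff ℝ 1 ρ) (hconv : ConvexOn ℝ Set.univ ρ)
    (hzero : ∀ s ≤ (0 : ℝ), ρ s = 0)
    (hbound : ∀ s : ℝ, 0 ≤ deriv ρ s ∧ deriv ρ s ≤ γ)
    (A B : Matrix (Fin 2) (Fin 2) ℝ) :
    (1 - γ) * ∑ i : Fin 2, ∑ j : Fin 2, (A i j - B i j) ^ 2 ≤
      finner (gradW ρ A - gradW ρ B) (A - B) := by
  set a := deriv ρ A.det with ha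
  set b := deriv ρ B.det with hb
  -- derivative monotone on ℝ
  have hmono : Monotone (deriv ρ) := by
    have := hconv.monotoneOn_deriv (fun x _ => (hρ.differentiable one_ne_zero).differentiableAt)
    intro x y hxy
    exact this (Set.mem_univ x) (Set.mem_univ y) hxy
  have hab : 0 ≤ (a - b) * (A.det - B.det) := by
    rcases le_total A.det B.det with h | h
    · have := hmono h
      nlinarith
    · have := hmono h
      nlinarith
  obtain ⟨ha0, haγ⟩ := hbound A.det
  obtain ⟨hb0, hbγ⟩ := hbound B.det
  rw [← ha] at ha0 haγ
  rw [← hb] at hb0 hbγ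
  have hdet : A.det = A 0 0 * A 1 1 - A 0 1 * A 1 0 := Matrix.det_fin_two A
  have hdetB : B.det = B 0 0 * B 1 1 - B 0 1 * B 1 0 := Matrix.det_fin_two B
  rw [hdet, hdetB] at hab
  simp only [finner, gradW, Matrix.sub_apply, Matrix.add_apply, Matrix.smul_apply,
    cof, Fin.sum_univ_two, Matrix.cons_val', Matrix.cons_val_zero, Matrix.cons_val_one,
    Matrix.head_cons, Matrix.head_fin_const, Matrix.empty_val', Matrix.cons_val_fin_one,
    smul_eq_mul]
  simp only [Matrix.cons_val_zero, Matrix.cons_val_one, Matrix.head_cons, Matrix.head_fin_const,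
    Matrix.cons_val', Matrix.empty_val', Matrix.cons_val_fin_one, Matrix.of_apply]
  nlinarith [sq_nonneg (A 0 0 - B 0 0 - (A 1 1 - B 1 1)), sq_nonneg (A 0 0 - B 0 0 + (A 1 1 - B 1 1)),
    sq_nonneg (A 0 1 - B 0 1 - (A 1 0 - B 1 0)), sq_nonneg (A 0 1 - B 0 1 + (A 1 0 - B 1 0)),
    mul_nonneg ha0 hb0, mul_nonneg (sub_nonneg.2 haγ) (sub_nonneg.2 hbγ),
    mul_nonneg ha0 (sub_nonneg.2 hbγ), mul_nonneg hb0 (sub_nonneg.2 haγ)]
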